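/- Let m ≥ 2 and let (a,b) ∈ F_{2^m} × F_{2^m} with (a,b) ≠ (0,0). Then the weight wt(c(a,b)) = #{(x,y) ∈ D_3 : Tr(axy + bx) = 1} satisfies: wt(c(a,b)) = 2^{m−2}(2^m − 1) if a ∉ {0,1} and Tr((a+1)b) = 0; wt(c(a,b)) = 2^{2m−2} if a = 1, or if a = 0, b ≠ 0 and Tr(b) = 0; wt(c(a,b)) = 2^{m−2}(2^m + 1) if a ∉ {0,1} and Tr((a+1)b) = 1; and wt(c(a,b)) = 2^{m−1}(2^{m−1} + 1) if a = 0, b ≠ 0 and Tr(b) = 1. -/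

import Mathlib

attribute [local instance] Classical.propDecidable

noncomputable instance (m : ℕ) : Fintype (GaloisField 2 m) := Fintype.ofFinite _

/-- The absolute trace map from `F_{2^m}` to `F_2`. -/
noncomputable def Tr (m : ℕ) (x : GaloisField 2 m) : ZMod 2 :=
  Algebra.trace (ZMod 2) (GaloisField 2 m) x

/-- For `t ∈ F_2`, `sgn t` is the integer `(-1)^t`. -/
def sgn : ZMod 2 → ℤ := fun t => if t = 0 then 1 else -1

/-- The set `Υ₁ = {r + r⁻¹ : r ∈ F_{2^m}^*, r ≠ 1}`. -/
def Ups1 (m : ℕ) : Set (GaloisField 2 m) :=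
  {u | ∃ r : GaloisField 2 m, r ≠ 0 ∧ r ≠ 1 ∧ u = r + r⁻¹}

open Finset Function

lemma fiber_card_eq {F β : Type*} [AddCommGroup F] [Fintype F] [AddCommGroup β] [DecidableEq β]
    (f : F →+ β) {b : β} (hb : ∃ y, f y = b) :
    (univ.filter fun y => f y = b).card = (univ.filter fun y => f y = 0).card := by
  classical
  obtain ⟨y₀, hy₀⟩ := hb
  apply Finset.card_bij' (fun y _ => y - y₀) (fun y _ => y + y₀)
  · intro y hy
    simp only [mem_filter, mem_univ, true_and] at hy ⊢
    simp [map_sub, hy, hy₀]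
  · intro y hy
    simp only [mem_filter, mem_univ, true_and] at hy ⊢
    simp [map_add, hy, hy₀]
  · intros; abel
  · intros; abel

lemma card_mul_fiber {F β : Type*} [AddCommGroup F] [Fintype F] [AddCommGroup β] [Fintype β] [DecidableEq β]
    (f : F →+ β) (hf : Surjective f) (b : β) :
    Fintype.card β * (univ.filter fun y => f y = b).card = Fintype.card F := by
  classical
  have h1 : (univ : Finset F).card = ∑ c : β, (univ.filter fun y => f y = c).card :=
    Finset.card_eq_sum_card_fiberwise (fun x _ => Finset.mem_univ _)
  rw [Finset.card_univ] at h1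
  rw [h1,
    Finset.sum_congr rfl (fun c _ => (fiber_card_eq f (hf c)).trans (fiber_card_eq f (hf b)).symm),
    Finset.sum_const, smul_eq_mul, Finset.card_univ]

lemma zmod2_cases (e : ZMod 2) : e = 0 ∨ e = 1 := by revert e; decide

noncomputable def phi (m : ℕ) (c : GaloisField 2 m) : GaloisField 2 m →+ ZMod 2 :=
  ((Algebra.trace (ZMod 2) (GaloisField 2 m)).toAddMonoidHom).comp (AddMonoidHom.mulLeft c)

@[simp] lemma phi_apply (m : ℕ) (c y : GaloisField 2 m) : phi m c y = Tr m (c * y) := rfl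

lemma phi_surj (m : ℕ) (c : GaloisField 2 m) (hc : c ≠ 0) : Surjective (phi m c) := by
  obtain ⟨z, hz⟩ := Algebra.trace_surjective (ZMod 2) (GaloisField 2 m) 1
  intro t
  rcases zmod2_cases t with h | h
  · exact ⟨0, by simp [h, Tr]⟩
  · refine ⟨c⁻¹ * z, ?_⟩
    rw [phi_apply, h, ← mul_assoc, mul_inv_cancel₀ hc, one_mul]
    exact hz

noncomputable def psi (m : ℕ) (c₁ c₂ : GaloisField 2 m) :
    GaloisField 2 m →+ ZMod 2 × ZMod 2 := (phi m c₁).prod (phi m c₂)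

lemma psi_surj (m : ℕ) (c₁ c₂ : GaloisField 2 m) (h1 : c₁ ≠ 0) (h2 : c₂ ≠ 0)
    (hne : c₁ ≠ c₂) : Surjective (psi m c₁ c₂) := by
  have h12 : c₁ + c₂ ≠ 0 := fun h => hne (by have := CharTwo.add_eq_iff_eq_add.mp h; simpa using this)
  obtain ⟨u, hu⟩ := phi_surj m c₁ h1 1
  obtain ⟨v, hv⟩ := phi_surj m c₂ h2 1
  obtain ⟨w, hw⟩ := phi_surj m (c₁ + c₂) h12 1
  have hw' : phi m c₁ w + phi m c₂ w = 1 := by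
    rw [← hw]; simp [Tr, add_mul, map_add]
  have h10 : ∃ y, psi m c₁ c₂ y = (1, 0) := by
    rcases zmod2_cases (phi m c₂ u) with ha | ha
    · exact ⟨u, Prod.ext hu ha⟩
    · rcases zmod2_cases (phi m c₁ w) with hc | hc
      · have hcw : phi m c₂ w = 1 := by rwa [hc, zero_add] at hw'
        refine ⟨u + w, ?_⟩
        have : psi m c₁ c₂ (u + w) = (phi m c₁ u + phi m c₁ w, phi m c₂ u + phi m c₂ w) := by
          simp [psi, Prod.ext_iff, Tr, mul_add, map_add]
        rw [this, hu, hc, ha, hcw]; decide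
      · have hcw : phi m c₂ w = 0 := by
          rcases zmod2_cases (phi m c₂ w) with h | h
          · exact h
          · rw [hc, h] at hw'; exact absurd hw' (by decide)
        exact ⟨w, Prod.ext hc hcw⟩
  have h01 : ∃ y, psi m c₁ c₂ y = (0, 1) := by
    rcases zmod2_cases (phi m c₁ v) with ha | ha
    · exact ⟨v, Prod.ext ha hv⟩
    · rcases zmod2_cases (phi m c₂ w) with hc | hc
      · have hcw : phi m c₁ w = 1 := by rwa [hc, add_zero] at hw'
        refine ⟨v + w, ?_⟩
        have : psi m c₁ c₂ (v + w) = (phi m c₁ v + phi m c₁ w, phi m c₂ v + phi m c₂ w) := by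
          simp [psi, Prod.ext_iff, Tr, mul_add, map_add]
        rw [this, hv, ha, hcw, hc]; decide
      · have hcw : phi m c₁ w = 0 := by
          rcases zmod2_cases (phi m c₁ w) with h | h
          · exact h
          · rw [hc, h] at hw'; exact absurd hw' (by decide)
        exact ⟨w, Prod.ext hcw hc⟩
  obtain ⟨y₁, hy₁⟩ := h10
  obtain ⟨y₂, hy₂⟩ := h01
  rintro ⟨s, t⟩
  rcases zmod2_cases s with hs | hs <;> rcases zmod2_cases t with ht | ht <;> subst hs <;> subst ht
  · exact ⟨0, map_zero _⟩
  · exact ⟨y₂, hy₂⟩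
  · exact ⟨y₁, hy₁⟩
  · exact ⟨y₁ + y₂, by rw [map_add, hy₁, hy₂]; decide⟩

lemma gf_card (m : ℕ) (hm0 : m ≠ 0) : Fintype.card (GaloisField 2 m) = 2 ^ m := by
  have := GaloisField.card 2 m hm0
  simpa [Nat.card_eq_fintype_card] using this

lemma count_one (m : ℕ) (hm : 1 ≤ m) (c : GaloisField 2 m) (hc : c ≠ 0) (t : ZMod 2) :
    (univ.filter fun y => Tr m (c * y) = t).card = 2 ^ (m - 1) := by
  have h := card_mul_fiber (phi m c) (phi_surj m c hc) t
  rw [gf_card m (by omega)] at h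
  have hset : (univ.filter fun y => Tr m (c * y) = t)
      = (univ.filter fun y => phi m c y = t) := by
    ext y; rw [mem_filter, mem_filter]; rfl
  rw [hset]
  have h2 : Fintype.card (ZMod 2) = 2 := rfl
  rw [h2] at h
  have hpm : 2 ^ m = 2 ^ (m - 1) * 2 := by
    rw [← pow_succ]; congr 1; omega
  omega

lemma count_two (m : ℕ) (hm : 2 ≤ m) (c₁ c₂ : GaloisField 2 m) (h1 : c₁ ≠ 0) (h2 : c₂ ≠ 0)
    (hne : c₁ ≠ c₂) (t₁ t₂ : ZMod 2) :
    (univ.filter fun y => Tr m (c₁ * y) = t₁ ∧ Tr m (c₂ * y) = t₂).card = 2 ^ (m - 2) := by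
  have h := card_mul_fiber (psi m c₁ c₂) (psi_surj m c₁ c₂ h1 h2 hne) (t₁, t₂)
  rw [gf_card m (by omega)] at h
  have hset : (univ.filter fun y => Tr m (c₁ * y) = t₁ ∧ Tr m (c₂ * y) = t₂)
      = (univ.filter fun y => psi m c₁ c₂ y = (t₁, t₂)) := by
    ext y; simp [psi, Prod.ext_iff]
  rw [hset]
  have h4 : Fintype.card (ZMod 2 × ZMod 2) = 4 := rfl
  rw [h4] at h
  have hpm : 2 ^ m = 2 ^ (m - 2) * 4 := by
    have : 2 ^ m = 2 ^ (m - 2 + 2) := by congr 1; omega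
    rw [this, pow_add]; norm_num
  omega

noncomputable def Nx (m : ℕ) (a b x : GaloisField 2 m) : ℕ :=
  (univ.filter fun y => Tr m (y * x ^ 2 + x * y) = 0 ∧ Tr m (a * x * y + b * x) = 1).card

lemma Nx_rw (m : ℕ) (a b x : GaloisField 2 m) :
    Nx m a b x = (univ.filter fun y =>
      Tr m ((x ^ 2 + x) * y) = 0 ∧ Tr m ((a * x) * y) = 1 + Tr m (b * x)).card := by
  unfold Nx
  congr 1
  ext y
  simp only [mem_filter, mem_univ, true_and]
  have e1 : y * x ^ 2 + x * y = (x ^ 2 + x) * y := by ring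
  have e2 : Tr m (a * x * y + b * x) = Tr m ((a * x) * y) + Tr m (b * x) :=
    map_add (Algebra.trace (ZMod 2) (GaloisField 2 m)) _ _
  have e3 : ∀ u v : ZMod 2, (u + v = 1 ↔ u = 1 + v) := by decide
  rw [e1, e2, e3]

lemma c1_ne (m : ℕ) (x : GaloisField 2 m) (hx0 : x ≠ 0) (hx1 : x ≠ 1) : x ^ 2 + x ≠ 0 := by
  intro h
  have h' : x * (x + 1) = 0 := by linear_combination h
  rcases mul_eq_zero.mp h' with h'' | h''
  · exact hx0 h''
  · exact hx1 (by have := CharTwo.add_eq_iff_eq_add.mp h''; simpa using this)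

lemma Nx_indep (m : ℕ) (hm : 2 ≤ m) (a b x : GaloisField 2 m) (h1 : x ^ 2 + x ≠ 0)
    (h2 : a * x ≠ 0) (hne : x ^ 2 + x ≠ a * x) : Nx m a b x = 2 ^ (m - 2) := by
  rw [Nx_rw]
  exact count_two m hm _ _ h1 h2 hne 0 _

@[simp] lemma Tr_zero (m : ℕ) : Tr m 0 = 0 :=
  map_zero (Algebra.trace (ZMod 2) (GaloisField 2 m))

lemma Nx_dep (m : ℕ) (hm : 1 ≤ m) (a b x : GaloisField 2 m) (h1 : x ^ 2 + x ≠ 0)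
    (heq : a * x = x ^ 2 + x) :
    Nx m a b x = if Tr m (b * x) = 1 then 2 ^ (m - 1) else 0 := by
  rw [Nx_rw]
  rcases zmod2_cases (Tr m (b * x)) with h | h
  · rw [if_neg (by simp [h])]
    have hempty : (univ.filter fun y =>
        Tr m ((x ^ 2 + x) * y) = 0 ∧ Tr m ((a * x) * y) = 1 + Tr m (b * x)) = ∅ := by
      ext y
      simp only [mem_filter, mem_univ, true_and, notMem_empty, iff_false, heq, h]
      rintro ⟨p, q⟩
      rw [p] at q
      exact (by decide : (0 : ZMod 2) ≠ 1 + 0) q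
    rw [hempty, card_empty]
  · rw [if_pos h]
    have hone : (univ.filter fun y =>
        Tr m ((x ^ 2 + x) * y) = 0 ∧ Tr m ((a * x) * y) = 1 + Tr m (b * x))
        = (univ.filter fun y => Tr m ((x ^ 2 + x) * y) = 0) := by
      ext y
      simp only [mem_filter, mem_univ, true_and, heq, h]
      have h2 : (1 : ZMod 2) + 1 = 0 := by decide
      rw [h2, and_self]
    rw [hone]
    exact count_one m hm _ h1 0

lemma Nx_a0 (m : ℕ) (hm : 1 ≤ m) (b x : GaloisField 2 m) (h1 : x ^ 2 + x ≠ 0) :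
    Nx m 0 b x = if Tr m (b * x) = 1 then 2 ^ (m - 1) else 0 := by
  rw [Nx_rw]
  rcases zmod2_cases (Tr m (b * x)) with h | h
  · rw [if_neg (by simp [h])]
    have hempty : (univ.filter fun y =>
        Tr m ((x ^ 2 + x) * y) = 0 ∧ Tr m ((0 * x) * y) = 1 + Tr m (b * x)) = ∅ := by
      ext y
      simp only [mem_filter, mem_univ, true_and, notMem_empty, iff_false, h, zero_mul,
        Tr_zero]
      rintro ⟨-, q⟩
      exact (by decide : (0 : ZMod 2) ≠ 1 + 0) q
    rw [hempty, card_empty]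
  · rw [if_pos h]
    have hone : (univ.filter fun y =>
        Tr m ((x ^ 2 + x) * y) = 0 ∧ Tr m ((0 * x) * y) = 1 + Tr m (b * x))
        = (univ.filter fun y => Tr m ((x ^ 2 + x) * y) = 0) := by
      ext y
      simp [h, CharTwo.add_self_eq_zero]
    rw [hone]
    exact count_one m hm _ h1 0

lemma Nx_x1 (m : ℕ) (hm : 1 ≤ m) (a b : GaloisField 2 m) (ha : a ≠ 0) :
    Nx m a b 1 = 2 ^ (m - 1) := by
  rw [Nx_rw]
  have h0 : ((1 : GaloisField 2 m) ^ 2 + 1) = 0 := by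
    rw [one_pow]; exact CharTwo.add_self_eq_zero 1
  have hone : (univ.filter fun y =>
      Tr m (((1 : GaloisField 2 m) ^ 2 + 1) * y) = 0 ∧
        Tr m ((a * 1) * y) = 1 + Tr m (b * 1)) =
      (univ.filter fun y => Tr m (a * y) = 1 + Tr m (b * 1)) := by
    ext y
    simp only [mem_filter, mem_univ, true_and, h0, zero_mul, Tr_zero, mul_one,
      eq_self_iff_true, true_and]
  rw [hone]
  exact count_one m hm a ha _

lemma Nx_x1_a0 (m : ℕ) (hm0 : m ≠ 0) (b : GaloisField 2 m) :
    Nx m 0 b 1 = if Tr m b = 1 then 2 ^ m else 0 := by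
  rw [Nx_rw]
  have h0 : ((1 : GaloisField 2 m) ^ 2 + 1) = 0 := by
    rw [one_pow]; exact CharTwo.add_self_eq_zero 1
  rcases zmod2_cases (Tr m b) with h | h
  · rw [if_neg (by simp [h])]
    have hempty : (univ.filter fun y =>
        Tr m (((1 : GaloisField 2 m) ^ 2 + 1) * y) = 0 ∧
          Tr m ((0 * 1) * y) = 1 + Tr m (b * 1)) = ∅ := by
      ext y
      simp [h0, h]
    rw [hempty, card_empty]
  · rw [if_pos h]
    have huniv : (univ.filter fun y =>
        Tr m (((1 : GaloisField 2 m) ^ 2 + 1) * y) = 0 ∧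
          Tr m ((0 * 1) * y) = 1 + Tr m (b * 1)) = univ := by
      ext y
      simp [h0, h, CharTwo.add_self_eq_zero]
    rw [huniv, card_univ, gf_card m hm0]

theorem stmt14 (m : ℕ) (hm : 2 ≤ m) (a b : GaloisField 2 m) (hab : (a, b) ≠ (0, 0)) :
    let wt : ℕ := (Finset.univ.filter (fun p : GaloisField 2 m × GaloisField 2 m =>
      p.1 ≠ 0 ∧ Tr m (p.2 * p.1 ^ 2 + p.1 * p.2) = 0 ∧
        Tr m (a * p.1 * p.2 + b * p.1) = 1)).card
    (a ≠ 0 → a ≠ 1 → Tr m ((a + 1) * b) = 0 → wt = 2 ^ (m - 2) * (2 ^ m - 1)) ∧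
    (a = 1 ∨ (a = 0 ∧ b ≠ 0 ∧ Tr m b = 0) → wt = 2 ^ (2 * m - 2)) ∧
    (a ≠ 0 → a ≠ 1 → Tr m ((a + 1) * b) = 1 → wt = 2 ^ (m - 2) * (2 ^ m + 1)) ∧
    (a = 0 → b ≠ 0 → Tr m b = 1 → wt = 2 ^ (m - 1) * (2 ^ (m - 1) + 1)) := by
  intro wt
  have hm0 : m ≠ 0 := by omega
  have h2F : (2 : GaloisField 2 m) = 0 := CharTwo.two_eq_zero
  -- step 1 : wt as a sum over x
  have hwt : wt = ∑ x : GaloisField 2 m, (if x = 0 then 0 else Nx m a b x) := by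
    show (Finset.univ.filter (fun p : GaloisField 2 m × GaloisField 2 m =>
      p.1 ≠ 0 ∧ Tr m (p.2 * p.1 ^ 2 + p.1 * p.2) = 0 ∧
        Tr m (a * p.1 * p.2 + b * p.1) = 1)).card = _
    rw [Finset.card_filter, ← Finset.univ_product_univ, Finset.sum_product]
    refine Finset.sum_congr rfl fun x _ => ?_
    by_cases hx : x = 0
    · simp [hx]
    · rw [if_neg hx, Nx, Finset.card_filter]
      refine Finset.sum_congr rfl fun y _ => ?_
      simp [hx]
  -- arithmetic abbreviations
  set A : ℕ := 2 ^ (m - 2) with hA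
  have hA1 : 1 ≤ A := Nat.one_le_pow _ _ (by norm_num)
  have hAB : A ≤ A * A := Nat.le_mul_of_pos_left _ (by omega)
  have hpm1 : 2 ^ (m - 1) = A * 2 := by rw [hA, ← pow_succ]; congr 1; omega
  have hpm : 2 ^ m = A * 4 := by
    rw [hA, show (4 : ℕ) = 2 ^ 2 by norm_num, ← pow_add]; congr 1; omega
  -- case a ∉ {0,1}
  have hcase1 : a ≠ 0 → a ≠ 1 →
      wt = 2 ^ (m - 1) + ((if Tr m (b * (a + 1)) = 1 then 2 ^ (m - 1) else 0)
        + (2 ^ m - 3) * 2 ^ (m - 2)) := by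
    intro ha0 ha1
    have ha10 : a + 1 ≠ 0 := fun h => ha1 (by linear_combination h - h2F)
    have ha11 : a + 1 ≠ (1 : GaloisField 2 m) := fun h => ha0 (by linear_combination h)
    have h1mem : (1 : GaloisField 2 m) ∈ Finset.univ.erase 0 :=
      Finset.mem_erase.mpr ⟨one_ne_zero, Finset.mem_univ _⟩
    have hamem : a + 1 ∈ (Finset.univ.erase (0 : GaloisField 2 m)).erase 1 :=
      Finset.mem_erase.mpr ⟨ha11, Finset.mem_erase.mpr ⟨ha10, Finset.mem_univ _⟩⟩
    set g : GaloisField 2 m → ℕ := fun x => if x = 0 then 0 else Nx m a b x with hg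
    have e0 : g 0 = 0 := by simp [hg]
    rw [hwt, ← Finset.add_sum_erase _ g (Finset.mem_univ 0), e0, zero_add,
      ← Finset.add_sum_erase _ g h1mem, ← Finset.add_sum_erase _ g hamem]
    have e1 : g 1 = 2 ^ (m - 1) := by
      rw [hg]; simp only [if_neg (one_ne_zero (α := GaloisField 2 m))]
      exact Nx_x1 m (by omega) a b ha0
    have e2 : g (a + 1) = if Tr m (b * (a + 1)) = 1 then 2 ^ (m - 1) else 0 := by
      rw [hg]; simp only [if_neg ha10]
      refine Nx_dep m (by omega) a b (a + 1) (c1_ne m (a + 1) ha10 ha11) ?_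
      linear_combination -(a + 1) * h2F
    have e3 : ∑ x ∈ ((Finset.univ.erase (0 : GaloisField 2 m)).erase 1).erase (a + 1), g x
        = (2 ^ m - 3) * 2 ^ (m - 2) := by
      rw [Finset.sum_congr rfl (fun x hx => ?_), Finset.sum_const, smul_eq_mul]
      · congr 1
        rw [Finset.card_erase_of_mem hamem, Finset.card_erase_of_mem h1mem,
          Finset.card_erase_of_mem (Finset.mem_univ _), Finset.card_univ, gf_card m hm0]
        omega
      · obtain ⟨hxa, hx1, hx0⟩ := by
          simpa [Finset.mem_erase] using hx
        rw [hg]; simp only [if_neg hx0]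
        refine Nx_indep m hm a b x (c1_ne m x hx0 hx1) (mul_ne_zero ha0 hx0) ?_
        intro h
        have hsplit : x * (x + (1 + a)) = 0 := by linear_combination h + (a * x) * h2F
        rcases mul_eq_zero.mp hsplit with h' | h'
        · exact hx0 h'
        · exact hxa (by linear_combination h' - (a + 1) * h2F)
    rw [e1, e2, e3]
  -- case a = 1
  have hcase2 : a = 1 → wt = 2 ^ (m - 1) + (2 ^ m - 2) * 2 ^ (m - 2) := by
    intro ha
    subst ha
    have h1mem : (1 : GaloisField 2 m) ∈ Finset.univ.erase 0 :=
      Finset.mem_erase.mpr ⟨one_ne_zero, Finset.mem_univ _⟩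
    set g : GaloisField 2 m → ℕ := fun x => if x = 0 then 0 else Nx m 1 b x with hg
    have e0 : g 0 = 0 := by simp [hg]
    rw [hwt, ← Finset.add_sum_erase _ g (Finset.mem_univ 0), e0, zero_add,
      ← Finset.add_sum_erase _ g h1mem]
    have e1 : g 1 = 2 ^ (m - 1) := by
      rw [hg]; simp only [if_neg (one_ne_zero (α := GaloisField 2 m))]
      exact Nx_x1 m (by omega) 1 b one_ne_zero
    have e3 : ∑ x ∈ (Finset.univ.erase (0 : GaloisField 2 m)).erase 1, g x
        = (2 ^ m - 2) * 2 ^ (m - 2) := by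
      rw [Finset.sum_congr rfl (fun x hx => ?_), Finset.sum_const, smul_eq_mul]
      · congr 1
        rw [Finset.card_erase_of_mem h1mem,
          Finset.card_erase_of_mem (Finset.mem_univ _), Finset.card_univ, gf_card m hm0]
        omega
      · obtain ⟨hx1, hx0⟩ := by
          simpa [Finset.mem_erase] using hx
        rw [hg]; simp only [if_neg hx0]
        refine Nx_indep m hm 1 b x (c1_ne m x hx0 hx1) (by simpa using hx0) ?_
        intro h
        have hx2 : x ^ 2 = 0 := by linear_combination h
        exact hx0 (by simpa using pow_eq_zero_iff (n := 2) (by norm_num) |>.mp hx2)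
    rw [e1, e3]
  -- case a = 0
  have hcase3 : a = 0 → b ≠ 0 →
      wt = (if Tr m b = 1 then 2 ^ m else 0)
        + (2 ^ (m - 1) - (if Tr m b = 1 then 1 else 0)) * 2 ^ (m - 1) := by
    intro ha hb
    subst ha
    have h1mem : (1 : GaloisField 2 m) ∈ Finset.univ.erase 0 :=
      Finset.mem_erase.mpr ⟨one_ne_zero, Finset.mem_univ _⟩
    set g : GaloisField 2 m → ℕ := fun x => if x = 0 then 0 else Nx m 0 b x with hg
    have e0 : g 0 = 0 := by simp [hg]
    rw [hwt, ← Finset.add_sum_erase _ g (Finset.mem_univ 0), e0, zero_add,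
      ← Finset.add_sum_erase _ g h1mem]
    have e1 : g 1 = if Tr m b = 1 then 2 ^ m else 0 := by
      rw [hg]; simp only [if_neg (one_ne_zero (α := GaloisField 2 m))]
      exact Nx_x1_a0 m hm0 b
    have e3 : ∑ x ∈ (Finset.univ.erase (0 : GaloisField 2 m)).erase 1, g x
        = (2 ^ (m - 1) - (if Tr m b = 1 then 1 else 0)) * 2 ^ (m - 1) := by
    -- each term is `if Tr m (b*x) = 1 then 2^(m-1) else 0`
      have hterm : ∀ x ∈ (Finset.univ.erase (0 : GaloisField 2 m)).erase 1,
          g x = if Tr m (b * x) = 1 then 2 ^ (m - 1) else 0 := by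
        intro x hx
        obtain ⟨hx1, hx0⟩ := by simpa [Finset.mem_erase] using hx
        rw [hg]; simp only [if_neg hx0]
        exact Nx_a0 m (by omega) b x (c1_ne m x hx0 hx1)
      rw [Finset.sum_congr rfl hterm, ← Finset.sum_filter, Finset.sum_const, smul_eq_mul]
      congr 1
      rw [Finset.filter_erase, Finset.filter_erase]
      have h0f : (0 : GaloisField 2 m) ∉ Finset.univ.filter (fun x => Tr m (b * x) = 1) := by
        simp
      rw [Finset.erase_eq_of_notMem h0f]
      have hcardf : (Finset.univ.filter (fun x => Tr m (b * x) = 1)).card = 2 ^ (m - 1) :=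
        count_one m (by omega) b hb 1
      rcases zmod2_cases (Tr m b) with h | h
      · have h1f : (1 : GaloisField 2 m) ∉ Finset.univ.filter (fun x => Tr m (b * x) = 1) := by
          simp [h]
        rw [Finset.erase_eq_of_notMem h1f, hcardf, h]
        norm_num
      · have h1f : (1 : GaloisField 2 m) ∈ Finset.univ.filter (fun x => Tr m (b * x) = 1) := by
          simp [h]
        rw [Finset.card_erase_of_mem h1f, hcardf, h]
        norm_num
    rw [e1, e3]
  -- putting things together
  refine ⟨?_, ?_, ?_, ?_⟩
  · intro ha0 ha1 hT
    rw [hcase1 ha0 ha1, if_neg (by rw [mul_comm] at hT; simp [hT]), hpm1, hpm]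
    have : (A * 4 - 3) * A = 4 * (A * A) - 3 * A := by
      rw [Nat.sub_mul]; congr 1 <;> ring
    rw [this]
    have hr : A * (A * 4 - 1) = 4 * (A * A) - A := by
      rw [mul_comm, Nat.sub_mul]; congr 1 <;> ring
    rw [hr]
    omega
  · rintro (ha | ⟨ha, hb, hT⟩)
    · rw [hcase2 ha, hpm1, hpm]
      have h2m : 2 ^ (2 * m - 2) = A * (A * 4) := by
        rw [hA, ← hpm, ← pow_add]; congr 1; omega
      rw [h2m]
      have : (A * 4 - 2) * A = 4 * (A * A) - 2 * A := by
        rw [Nat.sub_mul]; congr 1 <;> ring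
      rw [this]
      have hr : A * (A * 4) = 4 * (A * A) := by ring
      rw [hr]
      omega
    · rw [hcase3 ha hb, if_neg (by simp [hT]), if_neg (by simp [hT])]
      have h2m : 2 ^ (2 * m - 2) = 2 ^ (m - 1) * 2 ^ (m - 1) := by
        rw [← pow_add]; congr 1; omega
      rw [Nat.sub_zero, zero_add, h2m]
  · intro ha0 ha1 hT
    rw [hcase1 ha0 ha1, if_pos (by rw [mul_comm] at hT; exact hT), hpm1, hpm]
    have : (A * 4 - 3) * A = 4 * (A * A) - 3 * A := by
      rw [Nat.sub_mul]; congr 1 <;> ring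
    rw [this]
    have hr : A * (A * 4 + 1) = 4 * (A * A) + A := by ring
    rw [hr]
    omega
  · intro ha hb hT
    rw [hcase3 ha hb, if_pos hT, if_pos hT]
    set C : ℕ := 2 ^ (m - 1) with hC
    have hC1 : 1 ≤ C := Nat.one_le_pow _ _ (by norm_num)
    have hCD : C ≤ C * C := Nat.le_mul_of_pos_left _ (by omega)
    have hpmC : 2 ^ m = C * 2 := by rw [hC, ← pow_succ]; congr 1; omega
    rw [hpmC]
    have : (C - 1) * C = C * C - C := by rw [Nat.sub_mul]; congr 1 <;> ring
    rw [this]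
    have hr : C * (C + 1) = C * C + C := by ring
    rw [hr]
    omega
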